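/- If Q is a finite strongly consistent dimer model, then the dimer algebra A_Q (and hence also the completed dimer algebra Â_Q) admits a Z-grading in which every nonconstant path has positive degree and every face-path has the same degree. -/

import Mathlib

/-!
# Dimer models with boundary

A common framework for dimer models on oriented surfaces with boundary,
following "Consistency of dimer models on surfaces with boundary".

A dimer model is a quiver with faces (two families of faces, bounding
counterclockwise resp. clockwise cycles) embedded in an oriented surface
`S(Q)`.  The purely combinatorial data (quiver, faces, the dimer-algebra
relations identifying the two return paths of an internal arrow) is
formalized concretely; the topological data coming from the embedding into
the glued surface (the homotopy relation on paths, whether the surface is a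
sphere, orientation of simple cycle-walks) is axiomatized as part of the
structure `DimerModel`.
-/

/-- The data of a quiver: vertices, arrows, source and target maps. -/
structure QD where
  V : Type
  E : Type
  src : E → V
  tgt : E → V

namespace QD

/-- `IsChain Q v l w` : the list of arrows `l`, in order of traversal,
forms a composable path from `v` to `w`. -/
def IsChain (Q : QD) : Q.V → List Q.E → Q.V → Prop
  | v, [], w => v = w
  | v, e :: l, w => Q.src e = v ∧ Q.IsChain (Q.tgt e) l w

theorem IsChain.append {Q : QD} : ∀ {l l' : List Q.E} {v w x : Q.V},
    Q.IsChain v l w → Q.IsChain w l' x → Q.IsChain v (l ++ l') x := by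
  intro l
  induction l with
  | nil =>
    intro l' v w x h h'
    have hvw : v = w := h
    subst hvw
    exact h'
  | cons e l ih =>
    intro l' v w x h h'
    exact ⟨h.1, ih h.2 h'⟩

/-- A path from `v` to `w` in the quiver `Q`: a composable list of arrows,
in order of traversal. -/
structure Pth (Q : QD) (v w : Q.V) where
  edges : List Q.E
  chain : Q.IsChain v edges w

/-- The constant path at a vertex. -/
def Pth.nil (Q : QD) (v : Q.V) : Pth Q v v := ⟨[], rfl⟩

/-- Composition of paths: first `p`, then `q`. -/
def Pth.comp {Q : QD} {u v w : Q.V} (p : Pth Q u v) (q : Pth Q v w) : Pth Q u w :=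
  ⟨p.edges ++ q.edges, p.chain.append q.chain⟩

/-- `p` occurs in `q` as a subpath. -/
def IsSubpath {Q : QD} {v w a b : Q.V} (p : Pth Q v w) (q : Pth Q a b) : Prop :=
  ∃ (r : Pth Q a v) (s : Pth Q w b), q = r.comp (p.comp s)

/-- `p` occurs in `q` as a proper subpath. -/
def IsProperSubpath {Q : QD} {v w a b : Q.V} (p : Pth Q v w) (q : Pth Q a b) : Prop :=
  IsSubpath p q ∧ p.edges.length < q.edges.length

end QD

open QD

/-- A quiver with faces: the combinatorial data underlying a dimer model with
boundary.  Faces come in two families, counterclockwise (`FCC`) and clockwise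
(`FCL`), each face being given by its bounding cycle (a base vertex together
with the list of its arrows in order of traversal). -/
structure FQD extends QD where
  /-- counterclockwise faces -/
  FCC : Type
  /-- clockwise faces -/
  FCL : Type
  ccBase : FCC → V
  clBase : FCL → V
  /-- the bounding cycle of a counterclockwise face -/
  ccEdges : FCC → List E
  /-- the bounding cycle of a clockwise face -/
  clEdges : FCL → List E
  cc_chain : ∀ f, toQD.IsChain (ccBase f) (ccEdges f) (ccBase f)
  cl_chain : ∀ f, toQD.IsChain (clBase f) (clEdges f) (clBase f)
  cc_ne : ∀ f, ccEdges f ≠ []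
  cl_ne : ∀ f, clEdges f ≠ []
  /-- each arrow appears at most once in the bounding cycle of a face -/
  cc_nodup : ∀ f, (ccEdges f).Nodup
  cl_nodup : ∀ f, (clEdges f).Nodup
  /-- each arrow lies in at most one counterclockwise face -/
  cc_unique : ∀ e (f g : FCC), e ∈ ccEdges f → e ∈ ccEdges g → f = g
  /-- each arrow lies in at most one clockwise face -/
  cl_unique : ∀ e (f g : FCL), e ∈ clEdges f → e ∈ clEdges g → f = g
  /-- each arrow lies in at least one face -/
  mem_face : ∀ e : E, (∃ f, e ∈ ccEdges f) ∨ (∃ f, e ∈ clEdges f)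
  /-- local finiteness: every vertex is incident with finitely many arrows -/
  locally_finite : ∀ v : V, {e : E | src e = v ∨ tgt e = v}.Finite

namespace FQD

/-- An internal arrow: one lying in (exactly) two faces, i.e. in both a
counterclockwise and a clockwise face. -/
def IsInternal (Q : FQD) (e : Q.E) : Prop :=
  (∃ f, e ∈ Q.ccEdges f) ∧ (∃ f, e ∈ Q.clEdges f)

/-- A boundary arrow: one lying in only one face. -/
def IsBoundary (Q : FQD) (e : Q.E) : Prop := ¬ Q.IsInternal e

/-- An internal vertex: one incident with no boundary arrow. -/
def InternalVertex (Q : FQD) (v : Q.V) : Prop :=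
  ∀ e : Q.E, (Q.src e = v ∨ Q.tgt e = v) → Q.IsInternal e

/-- `r` is the counterclockwise return path `R_e^cc` of the arrow `e`: the
path from the head of `e` to the tail of `e` consisting of all arrows of the
counterclockwise face containing `e` except `e` itself. -/
def IsRetCC (Q : FQD) (e : Q.E) (r : Pth Q.toQD (Q.tgt e) (Q.src e)) : Prop :=
  ∃ (f : Q.FCC) (l1 l2 : List Q.E), Q.ccEdges f = l1 ++ e :: l2 ∧ r.edges = l2 ++ l1

/-- `r` is the clockwise return path `R_e^cl` of the arrow `e`. -/
def IsRetCL (Q : FQD) (e : Q.E) (r : Pth Q.toQD (Q.tgt e) (Q.src e)) : Prop :=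
  ∃ (f : Q.FCL) (l1 l2 : List Q.E), Q.clEdges f = l1 ++ e :: l2 ∧ r.edges = l2 ++ l1

/-- `l` is (the list of arrows of) a cycle traversing a counterclockwise face
once, i.e. a rotation of the bounding cycle of a counterclockwise face. -/
def IsCCFaceList (Q : FQD) (l : List Q.E) : Prop :=
  l ≠ [] ∧ ∃ (f : Q.FCC) (l1 l2 : List Q.E), Q.ccEdges f = l1 ++ l2 ∧ l = l2 ++ l1

/-- `l` is a cycle traversing a clockwise face once. -/
def IsCLFaceList (Q : FQD) (l : List Q.E) : Prop :=
  l ≠ [] ∧ ∃ (f : Q.FCL) (l1 l2 : List Q.E), Q.clEdges f = l1 ++ l2 ∧ l = l2 ++ l1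

/-- `l` is a cycle traversing a face once. -/
def IsFaceList (Q : FQD) (l : List Q.E) : Prop :=
  Q.IsCCFaceList l ∨ Q.IsCLFaceList l

/-- `c` is a face-path: a cycle traversing a counterclockwise face once. -/
def IsCCFacePath (Q : FQD) {v : Q.V} (c : Pth Q.toQD v v) : Prop :=
  Q.IsCCFaceList c.edges

/-- `c` is a face-path: a cycle traversing a clockwise face once. -/
def IsCLFacePath (Q : FQD) {v : Q.V} (c : Pth Q.toQD v v) : Prop :=
  Q.IsCLFaceList c.edges

/-- `c` is a face-path at `v`: a cycle starting and ending at `v` which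
travels around a face of `Q` once. -/
def IsFacePath (Q : FQD) {v : Q.V} (c : Pth Q.toQD v v) : Prop :=
  Q.IsFaceList c.edges

/-- A basic left-morph: replace one occurrence of the counterclockwise return
path `R_e^cc` of an internal arrow `e` inside a path by the clockwise return
path `R_e^cl`.  This generates the defining relations of the dimer algebra. -/
inductive LeftMorph (Q : FQD) : ∀ {v w : Q.V}, Pth Q.toQD v w → Pth Q.toQD v w → Prop
  | mk {e : Q.E} (hint : Q.IsInternal e)
      {rcc rcl : Pth Q.toQD (Q.tgt e) (Q.src e)}
      (hcc : Q.IsRetCC e rcc) (hcl : Q.IsRetCL e rcl)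
      {a b : Q.V} (pre : Pth Q.toQD a (Q.tgt e)) (post : Pth Q.toQD (Q.src e) b) :
      LeftMorph Q (pre.comp (rcc.comp post)) (pre.comp (rcl.comp post))

/-- A basic right-morph: replace one occurrence of `R_e^cl` by `R_e^cc`. -/
def RightMorph (Q : FQD) {v w : Q.V} (p q : Pth Q.toQD v w) : Prop :=
  Q.LeftMorph q p

/-- Path-equivalence: two paths are path-equivalent iff they are equal in the
dimer algebra `A_Q`, i.e. iff they are related by a finite sequence of basic
morphs. -/
inductive PEquiv (Q : FQD) : ∀ {v w : Q.V}, Pth Q.toQD v w → Pth Q.toQD v w → Prop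
  | of {v w : Q.V} {p q : Pth Q.toQD v w} : Q.LeftMorph p q → PEquiv Q p q
  | refl {v w : Q.V} (p : Pth Q.toQD v w) : PEquiv Q p p
  | symm {v w : Q.V} {p q : Pth Q.toQD v w} : PEquiv Q p q → PEquiv Q q p
  | trans {v w : Q.V} {p q r : Pth Q.toQD v w} : PEquiv Q p q → PEquiv Q q r → PEquiv Q p r

/-- `FacePow Q p m q` : the path `q` is `p` composed with `m` face-paths,
i.e. `q` represents `[f^m p]`. -/
inductive FacePow (Q : FQD) {v w : Q.V} (p : Pth Q.toQD v w) : ℕ → Pth Q.toQD v w → Prop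
  | zero : FacePow Q p 0 p
  | succ {m : ℕ} {q : Pth Q.toQD v w} (hq : FacePow Q p m q) {c : Pth Q.toQD w w}
      (hc : Q.IsFacePath c) : FacePow Q p (m + 1) (q.comp c)

/-- A path `p` is minimal if one cannot write `[p] = [q f^m]` for any `m ≥ 1`. -/
def Minimal (Q : FQD) {v w : Q.V} (p : Pth Q.toQD v w) : Prop :=
  ¬ ∃ (m : ℕ) (q q' : Pth Q.toQD v w), 1 ≤ m ∧ Q.FacePow q m q' ∧ Q.PEquiv p q'

end FQD

/-- A dimer model with boundary: a quiver with faces together with the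
(axiomatized) topology of the oriented surface `S(Q)` obtained by gluing the
faces: the homotopy (rel endpoints) relation `Htp` on paths, the proposition
`IsSphere` stating that `S(Q)` is a sphere, and the relation `SimpleCCW p q`
stating that the cycle-walk `q⁻¹ p` is a simple counterclockwise cycle-walk
on `S(Q)`. -/
structure DimerModel extends FQD where
  /-- homotopy of paths (rel endpoints) in the surface `S(Q)` -/
  Htp : ∀ {v w : V}, Pth toQD v w → Pth toQD v w → Prop
  htp_refl : ∀ {v w : V} (p : Pth toQD v w), Htp p p
  htp_symm : ∀ {v w : V} {p q : Pth toQD v w}, Htp p q → Htp q p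
  htp_trans : ∀ {v w : V} {p q r : Pth toQD v w}, Htp p q → Htp q r → Htp p r
  htp_comp : ∀ {u v w : V} {p p' : Pth toQD u v} {q q' : Pth toQD v w},
      Htp p p' → Htp q q' → Htp (p.comp q) (p'.comp q')
  /-- the two return paths of an internal arrow are homotopic in `S(Q)` -/
  htp_of_morph : ∀ {v w : V} {p q : Pth toQD v w}, FQD.LeftMorph toFQD p q → Htp p q
  /-- face-paths are null-homotopic in `S(Q)` -/
  htp_face : ∀ {v : V} {c : Pth toQD v v}, FQD.IsFacePath toFQD c → Htp c (Pth.nil toQD v)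
  /-- `S(Q)` is a sphere (without boundary) -/
  IsSphere : Prop
  /-- `SimpleCCW p q` : the paths `p, q` share only their endpoints and the
  cycle-walk `q⁻¹ p` is a simple counterclockwise cycle-walk on `S(Q)` -/
  SimpleCCW : ∀ {v w : V}, Pth toQD v w → Pth toQD v w → Prop
  /-- coherence of the orientation: the bounding cycle of a counterclockwise
  face is a simple counterclockwise cycle -/
  ccw_cc_face : ∀ {v : V} {c : Pth toQD v v}, FQD.IsCCFacePath toFQD c →
      SimpleCCW c (Pth.nil toQD v)

namespace DimerModel

/-- Paths in the underlying quiver of a dimer model. -/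
abbrev Path (Q : DimerModel) (v w : Q.V) : Type := Pth Q.toQD v w

/-- A dimer model is path-consistent if for all vertices `v, w` and every
homotopy class of paths in `S(Q)` from `v` to `w` (represented by a path
`p₀`), there is a minimal path `r` in that class, unique up to
path-equivalence, such that every path in the class is path-equivalent to
`f^m r` for a unique `m ≥ 0`. -/
def PathConsistent (Q : DimerModel) : Prop :=
  ∀ (v w : Q.V) (p₀ : Q.Path v w),
    ∃ r : Q.Path v w,
      FQD.Minimal Q.toFQD r ∧ Q.Htp r p₀ ∧
      (∀ r' : Q.Path v w, FQD.Minimal Q.toFQD r' → Q.Htp r' p₀ →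
        FQD.PEquiv Q.toFQD r r') ∧
      (∀ p : Q.Path v w, Q.Htp p p₀ →
        ∃! m : ℕ, ∃ q : Q.Path v w, FQD.FacePow Q.toFQD r m q ∧ FQD.PEquiv Q.toFQD p q)

/-- The dimer algebra `A_Q` is a cancellation algebra: equalities of paths in
`A_Q` may be cancelled on the left and on the right. -/
def Cancellative (Q : DimerModel) : Prop :=
  (∀ {u v w : Q.V} (a : Q.Path u v) (p q : Q.Path v w),
      FQD.PEquiv Q.toFQD (a.comp p) (a.comp q) → FQD.PEquiv Q.toFQD p q) ∧
  (∀ {u v w : Q.V} (p q : Q.Path u v) (b : Q.Path v w),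
      FQD.PEquiv Q.toFQD (p.comp b) (q.comp b) → FQD.PEquiv Q.toFQD p q)

/-- The surface `S(Q)` is simply connected: any two paths with the same
endpoints are homotopic. -/
def SimplyConnected (Q : DimerModel) : Prop :=
  ∀ {v w : Q.V} (p q : Q.Path v w), Q.Htp p q

end DimerModel

/-! ### Perfect matchings -/

namespace FQD

/-- A perfect matching of a dimer model: a set of arrows containing exactly
one arrow of every face. -/
def IsPerfectMatching (Q : FQD) (M : Set Q.E) : Prop :=
  (∀ f : Q.FCC, ∃! e : Q.E, e ∈ M ∧ e ∈ Q.ccEdges f) ∧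
  (∀ f : Q.FCL, ∃! e : Q.E, e ∈ M ∧ e ∈ Q.clEdges f)

/-- A dimer model is nondegenerate if every arrow is contained in a perfect
matching. -/
def Nondegenerate (Q : FQD) : Prop :=
  ∀ e : Q.E, ∃ M : Set Q.E, Q.IsPerfectMatching M ∧ e ∈ M

open Classical in
/-- The intersection number of a list of arrows with a set `M` of arrows:
the number of its members lying in `M`, counted with multiplicity. -/
noncomputable def mcount (Q : FQD) (M : Set Q.E) : List Q.E → ℕ
  | [] => 0
  | e :: l => (if e ∈ M then 1 else 0) + Q.mcount M l

end FQD

namespace DimerModel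

/-- A dimer model (not on a sphere) is weakly consistent if it is
path-consistent (equivalently, strand-consistent; equivalently, its dimer
algebra is cancellative). -/
def WeaklyConsistent (Q : DimerModel) : Prop :=
  ¬ Q.IsSphere ∧ Q.PathConsistent

/-- A dimer model is strongly consistent if it is weakly consistent and
nondegenerate. -/
def StronglyConsistent (Q : DimerModel) : Prop :=
  Q.WeaklyConsistent ∧ FQD.Nondegenerate Q.toFQD

end DimerModel

namespace DimerModel

/-- The degree of a path with respect to a degree function on arrows. -/
def degSum (Q : DimerModel) (d : Q.E → ℤ) {v w : Q.V} (p : Q.Path v w) : ℤ :=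
  (p.edges.map d).sum

end DimerModel


open Classical in
private lemma sumIf_eq_zero {α : Type} (S : Set α) :
    ∀ (l : List α), (∀ x ∈ l, x ∉ S) →
      (l.map (fun e => if e ∈ S then (1:ℤ) else 0)).sum = 0 := by
  intro l
  induction l with
  | nil => intro _; simp
  | cons e l ih =>
    intro h
    simp only [List.map_cons, List.sum_cons]
    rw [if_neg (h e List.mem_cons_self),
      ih (fun x hx => h x (List.mem_cons_of_mem e hx))]
    ring

open Classical in
private lemma sumIf_eq_one {α : Type} (S : Set α) :
    ∀ (l : List α), l.Nodup → (∃! x, x ∈ S ∧ x ∈ l) →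
      (l.map (fun e => if e ∈ S then (1:ℤ) else 0)).sum = 1 := by
  intro l
  induction l with
  | nil =>
    rintro _ ⟨x, ⟨_, hx⟩, _⟩
    exact absurd hx List.not_mem_nil
  | cons e l ih =>
    rintro hnd ⟨x, ⟨hxS, hxl⟩, hu⟩
    have hel : e ∉ l := (List.nodup_cons.mp hnd).1
    simp only [List.map_cons, List.sum_cons]
    by_cases he : e ∈ S
    · have hz : ∀ y ∈ l, y ∉ S := by
        intro y hy hyS
        have hye : y = e :=
          (hu y ⟨hyS, List.mem_cons_of_mem e hy⟩).trans
            (hu e ⟨he, List.mem_cons_self⟩).symm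
        exact hel (by rwa [hye] at hy)
      rw [if_pos he, sumIf_eq_zero S l hz]
      ring
    · have hxl' : x ∈ l := by
        rcases List.mem_cons.mp hxl with h | h
        · exact absurd (h ▸ hxS) he
        · exact h
      have hex : ∃! y, y ∈ S ∧ y ∈ l :=
        ⟨x, ⟨hxS, hxl'⟩, fun y hy => hu y ⟨hy.1, List.mem_cons_of_mem e hy.2⟩⟩
      rw [if_neg he, ih (List.nodup_cons.mp hnd).2 hex]
      ring

/-- **Lemma 6.5 (posgrad).**
If `Q` is a finite strongly consistent dimer model, then the dimer algebra
`A_Q` (and hence also the completed dimer algebra `Â_Q`) admits a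
`ℤ`-grading (a degree function on arrows, inducing well-defined degrees on
elements of `A_Q`) such that every nonconstant path has positive degree and
every face-path has the same degree. -/
theorem exists_positive_grading (Q : DimerModel) (hfin : Finite Q.V)
    (hsc : Q.StronglyConsistent) :
    ∃ d : Q.E → ℤ,
      (∀ (v w : Q.V) (p q : Q.Path v w), FQD.PEquiv Q.toFQD p q →
        Q.degSum d p = Q.degSum d q) ∧
      (∀ (v w : Q.V) (p : Q.Path v w), p.edges ≠ [] → 0 < Q.degSum d p) ∧
      (∃ N : ℤ, ∀ (v : Q.V) (c : Q.Path v v), FQD.IsFacePath Q.toFQD c →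
        Q.degSum d c = N) := by
  classical
  obtain ⟨⟨hns, hpc⟩, hnd⟩ := hsc
  -- `E` is finite
  have hE : Finite Q.E := by
    have h1 : (Set.univ : Set Q.E).Finite := by
      have hsub : (Set.univ : Set Q.E) ⊆ ⋃ v, {e | Q.src e = v ∨ Q.tgt e = v} := by
        intro e _
        exact Set.mem_iUnion.2 ⟨Q.src e, Or.inl rfl⟩
      exact (Set.finite_iUnion fun v => Q.locally_finite v).subset hsub
    exact Set.finite_univ_iff.mp h1
  have : Fintype Q.E := Fintype.ofFinite _
  choose M hM hMe using hnd
  -- the indicator sum of a list with respect to a set of arrows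
  set s : Set Q.E → List Q.E → ℤ :=
    fun S l => (l.map (fun e => if e ∈ S then (1:ℤ) else 0)).sum with hs_def
  have hs_append : ∀ (S : Set Q.E) (l l' : List Q.E),
      s S (l ++ l') = s S l + s S l' := by
    intro S l l'
    simp [hs_def]
  -- a perfect matching meets every face cycle exactly once
  have hface : ∀ (S : Set Q.E), Q.IsPerfectMatching S →
      ∀ l : List Q.E, FQD.IsFaceList Q.toFQD l → s S l = 1 := by
    intro S hS l hl
    rcases hl with ⟨-, f, l1, l2, hf, hl⟩ | ⟨-, f, l1, l2, hf, hl⟩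
    · have h1 : s S (Q.ccEdges f) = 1 := by
        exact sumIf_eq_one S _ (Q.cc_nodup f) (hS.1 f)
      rw [hl, hs_append]
      rw [hf, hs_append] at h1
      linarith
    · have h1 : s S (Q.clEdges f) = 1 := by
        exact sumIf_eq_one S _ (Q.cl_nodup f) (hS.2 f)
      rw [hl, hs_append]
      rw [hf, hs_append] at h1
      linarith
  -- the indicator sum of either return path of e is 1 - [e ∈ S]
  have hretcc : ∀ (S : Set Q.E), Q.IsPerfectMatching S →
      ∀ (e : Q.E) (r : Pth Q.toQD (Q.tgt e) (Q.src e)), FQD.IsRetCC Q.toFQD e r →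
        s S r.edges = 1 - (if e ∈ S then (1:ℤ) else 0) := by
    intro S hS e r ⟨f, l1, l2, hf, hr⟩
    have h1 : s S (Q.ccEdges f) = 1 := sumIf_eq_one S _ (Q.cc_nodup f) (hS.1 f)
    rw [hf] at h1
    have h2 : s S (l1 ++ e :: l2) = s S l1 + ((if e ∈ S then (1:ℤ) else 0) + s S l2) := by
      rw [hs_append]
      simp [hs_def]
    rw [hr, hs_append]
    rw [h2] at h1
    linarith
  have hretcl : ∀ (S : Set Q.E), Q.IsPerfectMatching S →
      ∀ (e : Q.E) (r : Pth Q.toQD (Q.tgt e) (Q.src e)), FQD.IsRetCL Q.toFQD e r →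
        s S r.edges = 1 - (if e ∈ S then (1:ℤ) else 0) := by
    intro S hS e r ⟨f, l1, l2, hf, hr⟩
    have h1 : s S (Q.clEdges f) = 1 := sumIf_eq_one S _ (Q.cl_nodup f) (hS.2 f)
    rw [hf] at h1
    have h2 : s S (l1 ++ e :: l2) = s S l1 + ((if e ∈ S then (1:ℤ) else 0) + s S l2) := by
      rw [hs_append]
      simp [hs_def]
    rw [hr, hs_append]
    rw [h2] at h1
    linarith
  -- indicator sums are invariant under path-equivalence
  have hpe : ∀ (S : Set Q.E), Q.IsPerfectMatching S →
      ∀ {v w : Q.V} (p q : Q.Path v w), FQD.PEquiv Q.toFQD p q →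
        s S p.edges = s S q.edges := by
    intro S hS v w p q h
    induction h with
    | of h =>
      cases h with
      | @mk e hint rcc rcl hcc hcl a b pre post =>
        show s S (pre.comp (rcc.comp post)).edges = s S (pre.comp (rcl.comp post)).edges
        simp only [Pth.comp, hs_append]
        rw [hretcc S hS e rcc hcc, hretcl S hS e rcl hcl]
    | refl p => rfl
    | symm _ ih => exact ih.symm
    | trans _ _ ih1 ih2 => exact ih1.trans ih2
  -- the degree function
  refine ⟨fun e => ∑ a : Q.E, (if e ∈ M a then (1:ℤ) else 0), ?_, ?_, ?_⟩
  all_goals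
    have hdeg : ∀ (l : List Q.E),
        (l.map (fun e => ∑ a : Q.E, (if e ∈ M a then (1:ℤ) else 0))).sum
          = ∑ a : Q.E, s (M a) l := by
      intro l
      induction l with
      | nil => simp [hs_def]
      | cons e l ih =>
        simp only [List.map_cons, List.sum_cons, ih, hs_def]
        rw [← Finset.sum_add_distrib]
  · -- invariance under path-equivalence
    intro v w p q h
    show (p.edges.map _).sum = (q.edges.map _).sum
    rw [hdeg, hdeg]
    exact Finset.sum_congr rfl fun a _ => hpe (M a) (hM a) p q h
  · -- positivity
    intro v w p hp
    have hone : ∀ e : Q.E, (1:ℤ) ≤ ∑ a : Q.E, (if e ∈ M a then (1:ℤ) else 0) := by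
      intro e
      have := Finset.single_le_sum
        (f := fun a : Q.E => (if e ∈ M a then (1:ℤ) else 0))
        (fun a _ => by positivity) (Finset.mem_univ e)
      simpa [hMe e] using this
    show 0 < (p.edges.map _).sum
    obtain ⟨e, l, hel⟩ : ∃ e l, p.edges = e :: l := by
      cases hq : p.edges with
      | nil => exact absurd hq hp
      | cons e l => exact ⟨e, l, rfl⟩
    rw [hel]
    simp only [List.map_cons, List.sum_cons]
    have h0 : (0:ℤ) ≤ (l.map (fun e => ∑ a : Q.E, (if e ∈ M a then (1:ℤ) else 0))).sum := by
      apply List.sum_nonneg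
      intro x hx
      obtain ⟨y, -, rfl⟩ := List.mem_map.mp hx
      linarith [hone y]
    linarith [hone e]
  · -- all face-paths have the same degree
    refine ⟨(Fintype.card Q.E : ℤ), ?_⟩
    intro v c hc
    show (c.edges.map _).sum = _
    rw [hdeg]
    have : ∀ a : Q.E, s (M a) c.edges = 1 := fun a => hface (M a) (hM a) c.edges hc
    simp [this, Finset.card_univ]
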